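/- In the setting of the previous construction, for all x,y in the space: d^×(x,y) ≤ ω^{-1}(d_*(x,y)), where ω(τ) := τ + 2e^{-τ/2} - 2. More precisely, ω(d^×(x,y)) ≤ d_*(x,y). -/

import Mathlib

open MeasureTheory

/-- The averaged pseudometric d_*(x,y) := ∫ d^×(r⁺x, r⁺y)·(e^{-|r|}/2) dr,
where the ℝ-action is given by T. -/
noncomputable def dstar {Y : Type*} [PseudoMetricSpace Y]
    (T : ℝ → Y → Y) (x y : Y) : ℝ :=
  ∫ r : ℝ, dist (T r x) (T r y) * (Real.exp (-|r|) / 2)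

/-- Integrability of the dominating function `(c + 2|r|) e^{-|r|}/2`. -/
lemma integrable_bound (c : ℝ) :
    Integrable (fun r : ℝ => (c + 2 * |r|) * (Real.exp (-|r|) / 2)) := by
  set B : ℝ → ℝ := fun r => (c + 2 * |r|) * (Real.exp (-|r|) / 2) with hB
  have hIoi : IntegrableOn B (Set.Ioi 0) := by
    have h1 : IntegrableOn (fun r : ℝ => (c / 2) * Real.exp (-r)) (Set.Ioi 0) := by
      have := exp_neg_integrableOn_Ioi (0 : ℝ) (one_pos)
      simpa [IntegrableOn] using this.const_mul (c / 2)
    have h2 : IntegrableOn (fun r : ℝ => Real.exp (-r) * r ^ ((2:ℝ) - 1)) (Set.Ioi 0) :=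
      Real.GammaIntegral_convergent (by norm_num)
    have h2' : IntegrableOn (fun r : ℝ => r * Real.exp (-r)) (Set.Ioi 0) := by
      refine h2.congr_fun (fun r hr => ?_) measurableSet_Ioi
      simp only [Set.mem_Ioi] at hr
      rw [show ((2:ℝ) - 1) = 1 by norm_num]; beta_reduce; rw [Real.rpow_one, mul_comm]
    have hsum : IntegrableOn
        (fun r : ℝ => (c / 2) * Real.exp (-r) + r * Real.exp (-r)) (Set.Ioi 0) := h1.add h2'
    refine IntegrableOn.congr_fun hsum (fun r hr => ?_) measurableSet_Ioi
    simp only [Set.mem_Ioi] at hr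
    rw [hB]
    simp only [abs_of_pos hr]
    ring
  have hIci : IntegrableOn B (Set.Ici 0) := by
    rwa [integrableOn_Ici_iff_integrableOn_Ioi]
  have hind : Integrable ((Set.Ici (0:ℝ)).indicator B) :=
    hIci.integrable_indicator measurableSet_Ici
  have hneg := hind.comp_neg
  have hIic : IntegrableOn B (Set.Iic 0) := by
    rw [← integrable_indicator_iff measurableSet_Iic]
    refine hneg.congr (Filter.Eventually.of_forall fun r => ?_)
    show (Set.Ici (0:ℝ)).indicator B (-r) = (Set.Iic (0:ℝ)).indicator B r
    by_cases h : r ≤ 0 <;>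
      simp [Set.indicator_apply, Set.mem_Ici, Set.mem_Iic, neg_nonneg, h, hB, abs_neg]
  have : IntegrableOn B (Set.Iic 0 ∪ Set.Ioi 0) := hIic.union hIoi
  rwa [Set.Iic_union_Ioi, integrableOn_univ] at this

/-- ω(d^×(x,y)) ≤ d_*(x,y) where ω(τ) = τ + 2e^{-τ/2} - 2. -/
theorem omega_dcross_le_dstar {Y : Type*} [PseudoMetricSpace Y]
    (T : ℝ → Y → Y)
    (h0 : ∀ x, T 0 x = x)
    (hadd : ∀ (r s : ℝ) (x : Y), T (r + s) x = T r (T s x))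
    (horb : ∀ (x : Y) (r₁ r₂ : ℝ), dist (T r₁ x) (T r₂ x) ≤ |r₁ - r₂|)
    (x y : Y) :
    dist x y + 2 * Real.exp (-(dist x y) / 2) - 2 ≤ dstar T x y := by
  set τ := dist x y with hτ
  have hτ0 : 0 ≤ τ := dist_nonneg
  set a := τ / 2 with ha
  have ha0 : 0 ≤ a := by positivity
  set g : ℝ → ℝ := fun r => dist (T r x) (T r y) * (Real.exp (-|r|) / 2) with hg
  -- continuity of g
  have hdistcont : Continuous fun r : ℝ => dist (T r x) (T r y) := by
    have hlip : LipschitzWith 2 (fun r : ℝ => dist (T r x) (T r y)) := by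
      refine LipschitzWith.of_dist_le_mul fun r s => ?_
      calc dist (dist (T r x) (T r y)) (dist (T s x) (T s y))
          ≤ dist (T r x) (T s x) + dist (T r y) (T s y) := dist_dist_dist_le _ _ _ _
        _ ≤ |r - s| + |r - s| := add_le_add (horb x r s) (horb y r s)
        _ = 2 * dist r s := by rw [Real.dist_eq]; ring
    exact hlip.continuous
  have hgcont : Continuous g :=
    hdistcont.mul (((Real.continuous_exp.comp (continuous_abs.neg))).div_const 2)
  -- upper and lower bounds for dist (T r x) (T r y)
  have hub : ∀ r : ℝ, dist (T r x) (T r y) ≤ τ + 2 * |r| := by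
    intro r
    have h1 : dist (T r x) x ≤ |r| := by simpa [h0] using horb x r 0
    have h2 : dist (T r y) y ≤ |r| := by simpa [h0] using horb y r 0
    calc dist (T r x) (T r y) ≤ dist (T r x) x + dist x y + dist y (T r y) :=
          dist_triangle4 _ _ _ _
      _ ≤ |r| + τ + |r| := by
          refine add_le_add (add_le_add h1 le_rfl) ?_
          rwa [dist_comm]
      _ = τ + 2 * |r| := by ring
  have hlb : ∀ r : ℝ, τ - 2 * |r| ≤ dist (T r x) (T r y) := by
    intro r
    have h1 : dist (T r x) x ≤ |r| := by simpa [h0] using horb x r 0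
    have h2 : dist (T r y) y ≤ |r| := by simpa [h0] using horb y r 0
    have : τ ≤ dist x (T r x) + dist (T r x) (T r y) + dist (T r y) y :=
      dist_triangle4 _ _ _ _
    rw [dist_comm x (T r x)] at this
    linarith
  -- integrability of g
  have hgint : Integrable g := by
    refine (integrable_bound τ).mono' hgcont.aestronglyMeasurable
      (Filter.Eventually.of_forall fun r => ?_)
    rw [Real.norm_eq_abs, abs_of_nonneg (by positivity)]
    exact mul_le_mul_of_nonneg_right (hub r) (by positivity)
  have hgnonneg : ∀ r : ℝ, 0 ≤ g r := fun r => by positivity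
  -- the lower-bound function on [-a, a]
  set φ : ℝ → ℝ := fun r => (τ - 2 * |r|) * (Real.exp (-|r|) / 2) with hφ
  have hφcont : Continuous φ := by
    apply Continuous.mul
    · exact continuous_const.sub (continuous_const.mul continuous_abs)
    · exact (Real.continuous_exp.comp continuous_abs.neg).div_const 2
  -- compute ∫_{-a}^{a} φ = τ + 2 e^{-a} - 2
  have hright : ∫ r in (0:ℝ)..a, φ r = Real.exp (-a) - 1 + a := by
    have hEq : Set.EqOn φ (fun r => (τ - 2 * r) * (Real.exp (-r) / 2)) (Set.uIcc 0 a) := by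
      intro r hr
      rw [Set.uIcc_of_le ha0] at hr
      simp only [hφ, abs_of_nonneg hr.1]
    rw [intervalIntegral.integral_congr hEq]
    have hderiv : ∀ r ∈ Set.uIcc (0:ℝ) a,
        HasDerivAt (fun r => -(Real.exp (-r) * ((τ - 2 * r) / 2 - 1)))
          ((τ - 2 * r) * (Real.exp (-r) / 2)) r := by
      intro r _
      have h1 : HasDerivAt (fun r : ℝ => Real.exp (-r)) (-Real.exp (-r)) r := by
        simpa using (hasDerivAt_neg r).exp
      have h2 : HasDerivAt (fun r : ℝ => (τ - 2 * r) / 2 - 1) (-1) r := by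
        have := ((((hasDerivAt_id r).const_mul (2:ℝ)).const_sub τ).div_const 2).sub_const 1
        norm_num at this
        exact this.sub_const 1
      have : HasDerivAt (fun r => -(Real.exp (-r) * ((τ - 2 * r) / 2 - 1))) _ r :=
        (h1.fun_mul h2).fun_neg
      convert this using 1
      ring
    rw [intervalIntegral.integral_eq_sub_of_hasDerivAt hderiv
      ((Continuous.intervalIntegrable (by continuity) 0 a))]
    rw [show τ = 2 * a by rw [ha]; ring]
    norm_num [Real.exp_zero]
    ring
  have hleft : ∫ r in (-a)..(0:ℝ), φ r = a - 1 + Real.exp (-a) := by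
    have hEq : Set.EqOn φ (fun r => (τ + 2 * r) * (Real.exp r / 2)) (Set.uIcc (-a) 0) := by
      intro r hr
      rw [Set.uIcc_of_le (neg_nonpos.mpr ha0)] at hr
      simp only [hφ, abs_of_nonpos hr.2]
      ring_nf
    rw [intervalIntegral.integral_congr hEq]
    have hderiv : ∀ r ∈ Set.uIcc (-a) (0:ℝ),
        HasDerivAt (fun r => Real.exp r * ((τ + 2 * r) / 2 - 1))
          ((τ + 2 * r) * (Real.exp r / 2)) r := by
      intro r _
      have h1 : HasDerivAt Real.exp (Real.exp r) r := Real.hasDerivAt_exp r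
      have h2 : HasDerivAt (fun r : ℝ => (τ + 2 * r) / 2 - 1) (1 : ℝ) r := by
        have := ((((hasDerivAt_id r).const_mul (2:ℝ)).const_add τ).div_const 2).sub_const 1
        norm_num at this
        exact this.sub_const 1
      have : HasDerivAt (fun r => Real.exp r * ((τ + 2 * r) / 2 - 1)) _ r := h1.fun_mul h2
      convert this using 1
      ring
    rw [intervalIntegral.integral_eq_sub_of_hasDerivAt hderiv
      ((Continuous.intervalIntegrable (by continuity) (-a) 0))]
    rw [show τ = 2 * a by rw [ha]; ring]
    norm_num [Real.exp_zero]
  have hφtotal : ∫ r in (-a)..a, φ r = τ + 2 * Real.exp (-a) - 2 := by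
    rw [← intervalIntegral.integral_add_adjacent_intervals
      (hφcont.intervalIntegrable (-a) 0) (hφcont.intervalIntegrable 0 a), hleft, hright]
    rw [ha]; ring
  -- compare φ ≤ g on [-a, a]
  have hφ_le_g : ∫ r in (-a)..a, φ r ≤ ∫ r in (-a)..a, g r := by
    refine intervalIntegral.integral_mono_on (by linarith)
      (hφcont.intervalIntegrable _ _) (hgcont.intervalIntegrable _ _) fun r _ => ?_
    exact mul_le_mul_of_nonneg_right (hlb r) (by positivity)
  -- compare interval integral of g with the full integral
  have hint_le : ∫ r in (-a)..a, g r ≤ ∫ r : ℝ, g r := by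
    rw [intervalIntegral.integral_of_le (by linarith)]
    exact setIntegral_le_integral hgint (Filter.Eventually.of_forall hgnonneg)
  have : τ + 2 * Real.exp (-a) - 2 ≤ ∫ r : ℝ, g r := by
    rw [← hφtotal]; exact le_trans hφ_le_g hint_le
  rw [dstar, ← hg]
  have hna : -a = -τ / 2 := by rw [ha]; ring
  rw [hna] at this
  convert this using 3
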